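/- Let ℓ0 ≥ 11 be a prime number and set m0 = ℓ0 − 2. Then the only pair (ℓ, m) in T satisfying the resonance equation m0²(ℓ+2)(ℓ−1)ℓ = (ℓ0+2)(ℓ0−1)ℓ0·m² is (ℓ, m) = (ℓ0, ℓ0 − 2). -/
import Mathlib

/-- Let `ℓ0 ≥ 11` be a prime number and set `m0 = ℓ0 − 2`. Then the only pair
`(ℓ, m)` in the set `T` (consisting of the pairs with `1 ≤ ℓ ≤ c0 = (ℓ0+2)(ℓ0−1)ℓ0/m0²`,
`0 ≤ m ≤ ℓ`, `ℓ − m` even) satisfying the resonance equation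
`m0²(ℓ+2)(ℓ−1)ℓ = (ℓ0+2)(ℓ0−1)ℓ0·m²` is `(ℓ, m) = (ℓ0, ℓ0 − 2)`.
(The condition `ℓ ≤ c0` is expressed equivalently as `ℓ·m0² ≤ (ℓ0+2)(ℓ0−1)ℓ0`.) -/
theorem stmt1 (ℓ0 : ℕ) (hprime : Nat.Prime ℓ0) (h11 : 11 ≤ ℓ0)
    (m0 : ℕ) (hm0 : m0 = ℓ0 - 2) :
    {q : ℕ × ℕ | 1 ≤ q.1 ∧ q.1 * m0 ^ 2 ≤ (ℓ0 + 2) * (ℓ0 - 1) * ℓ0 ∧ q.2 ≤ q.1 ∧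
        Even (q.1 - q.2) ∧
        m0 ^ 2 * ((q.1 + 2) * (q.1 - 1) * q.1) = (ℓ0 + 2) * (ℓ0 - 1) * ℓ0 * q.2 ^ 2}
      = {(ℓ0, ℓ0 - 2)} := by
  subst hm0
  obtain ⟨n, rfl⟩ : ∃ n, ℓ0 = n + 11 := ⟨ℓ0 - 11, by omega⟩
  have e2 : n + 11 - 2 = n + 9 := by omega
  have e1 : n + 11 - 1 = n + 10 := by omega
  rw [e1, e2]
  have hodd : Odd (n + 11) := hprime.odd_of_ne_two (by omega)
  have hn2 : n % 2 = 0 := by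
    rw [Nat.odd_iff] at hodd; omega
  ext ⟨ℓ, m⟩
  simp only [Set.mem_setOf_eq, Set.mem_singleton_iff, Prod.mk.injEq]
  constructor
  · rintro ⟨h1, h2, h3, h4, h5⟩
    -- bound on ℓ
    have hle : ℓ ≤ n + 17 := by nlinarith [h2]
    -- the prime ℓ0 divides the product
    have hd0 : (n + 11) ∣ (n + 9) ^ 2 * ((ℓ + 2) * (ℓ - 1) * ℓ) := by
      rw [h5]
      exact ⟨(n + 13) * (n + 10) * m ^ 2, by ring⟩
    have hcop : ¬ (n + 11) ∣ (n + 9) ^ 2 := by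
      intro h
      rcases (Nat.Prime.dvd_mul hprime).1 (by simpa [sq] using h) with h | h <;>
        exact absurd (Nat.le_of_dvd (by omega) h) (by omega)
    have hd1 : (n + 11) ∣ (ℓ + 2) * (ℓ - 1) * ℓ :=
      ((Nat.Coprime.dvd_of_dvd_mul_left
        ((hprime.coprime_iff_not_dvd).2 hcop) hd0))
    have hdcases : (n + 11) ∣ (ℓ + 2) ∨ (n + 11) ∣ (ℓ - 1) ∨ (n + 11) ∣ ℓ := by
      rcases (Nat.Prime.dvd_mul hprime).1 hd1 with h | h
      · rcases (Nat.Prime.dvd_mul hprime).1 h with h | h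
        · exact Or.inl h
        · exact Or.inr (Or.inl h)
      · exact Or.inr (Or.inr h)
    -- helper: any of these divisibilities pins down ℓ
    have oddn13 : ¬ (2 ∣ (n + 13)) := by omega
    have cop2 : Nat.Coprime (n + 13) 2 :=
      Nat.coprime_comm.mp ((Nat.prime_two.coprime_iff_not_dvd).2 oddn13)
    rcases hdcases with h | h | h
    · -- ℓ + 2 = ℓ0, i.e. ℓ = n + 9 : leads to (n+13) ∣ 640, impossible
      obtain ⟨k, hk⟩ := h
      have hk1 : k = 1 := by
        rcases k with _ | _ | k
        · omega
        · rfl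
        · exfalso
          have h' : (n + 11) * 2 ≤ (n + 11) * (k + 1 + 1) :=
            Nat.mul_le_mul_left _ (by omega)
          rw [← hk] at h'
          omega
      subst hk1
      obtain rfl : ℓ = n + 9 := by omega
      exfalso
      rw [show n + 9 - 1 = n + 8 from by omega, show n + 9 + 2 = n + 11 from rfl] at h5
      have hdvd : (n + 13 : ℤ) ∣ ((n : ℤ) + 9) ^ 2 * (((n : ℤ) + 11) * ((n : ℤ) + 8) * ((n : ℤ) + 9)) := by
        have : (n + 13) ∣ (n + 9) ^ 2 * ((n + 11) * (n + 8) * (n + 9)) := by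
          rw [h5]; exact ⟨(n + 10) * (n + 11) * m ^ 2, by ring⟩
        exact_mod_cast Int.natCast_dvd_natCast.2 this
      have h640 : (n + 13 : ℤ) ∣ 640 := by
        have hq : (n + 13 : ℤ) ∣ (n + 13 : ℤ) *
            ((n : ℤ) ^ 4 + 33 * (n : ℤ) ^ 3 + 415 * (n : ℤ) ^ 2 + 2327 * (n : ℤ) + 4984) :=
          Dvd.intro _ rfl
        have := hq.sub hdvd
        have heq : (n + 13 : ℤ) *
            ((n : ℤ) ^ 4 + 33 * (n : ℤ) ^ 3 + 415 * (n : ℤ) ^ 2 + 2327 * (n : ℤ) + 4984)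
            - ((n : ℤ) + 9) ^ 2 * (((n : ℤ) + 11) * ((n : ℤ) + 8) * ((n : ℤ) + 9)) = 640 := by
          ring
        rwa [heq] at this
      have h640' : (n + 13) ∣ 640 := by
        have := Int.natCast_dvd_natCast.mp (by exact_mod_cast h640 : ((n + 13 : ℕ) : ℤ) ∣ ((640 : ℕ) : ℤ))
        exact this
      have : (n + 13) ∣ 5 := by
        have : (n + 13) ∣ 5 * 2 ^ 7 := by simpa using h640'
        exact Nat.Coprime.dvd_of_dvd_mul_right (cop2.pow_right 7) this
      have := Nat.le_of_dvd (by norm_num) this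
      omega
    · -- ℓ - 1 = 0 or ℓ - 1 = ℓ0
      obtain ⟨k, hk⟩ := h
      have hk1 : k = 0 ∨ k = 1 := by
        rcases k with _ | _ | k
        · left; rfl
        · right; rfl
        · exfalso
          have h' : (n + 11) * 2 ≤ (n + 11) * (k + 1 + 1) :=
            Nat.mul_le_mul_left _ (by omega)
          rw [← hk] at h'
          omega
      rcases hk1 with rfl | rfl
      · -- ℓ = 1, forces m = 0, contradicts parity
        exfalso
        obtain rfl : ℓ = 1 := by omega
        rw [show (1 : ℕ) - 1 = 0 from rfl] at h5
        have h0 : (n + 11 + 2) * (n + 10) * (n + 11) * m ^ 2 = 0 := by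
          rw [← h5]; norm_num
        have hm : m = 0 := by
          simp only [Nat.mul_eq_zero, pow_eq_zero_iff, ne_eq, OfNat.ofNat_ne_zero,
            not_false_eq_true] at h0
          omega
        subst hm
        simp [Nat.even_iff] at h4
      · -- ℓ = n + 12 : leads to (n+13) ∣ 32, impossible
        obtain rfl : ℓ = n + 12 := by omega
        exfalso
        rw [show n + 12 - 1 = n + 11 from by omega, show n + 12 + 2 = n + 14 from rfl] at h5
        have hdvd : (n + 13 : ℤ) ∣ ((n : ℤ) + 9) ^ 2 * (((n : ℤ) + 14) * ((n : ℤ) + 11) * ((n : ℤ) + 12)) := by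
          have : (n + 13) ∣ (n + 9) ^ 2 * ((n + 14) * (n + 11) * (n + 12)) := by
            rw [h5]; exact ⟨(n + 10) * (n + 11) * m ^ 2, by ring⟩
          exact_mod_cast Int.natCast_dvd_natCast.2 this
        have h32 : (n + 13 : ℤ) ∣ 32 := by
          have hq : (n + 13 : ℤ) ∣ (n + 13 : ℤ) *
              ((n : ℤ) ^ 4 + 42 * (n : ℤ) ^ 3 + 655 * (n : ℤ) ^ 2 + 4502 * (n : ℤ) + 11512) :=
            Dvd.intro _ rfl
          have := hdvd.sub hq
          have heq : ((n : ℤ) + 9) ^ 2 * (((n : ℤ) + 14) * ((n : ℤ) + 11) * ((n : ℤ) + 12))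
              - (n + 13 : ℤ) *
              ((n : ℤ) ^ 4 + 42 * (n : ℤ) ^ 3 + 655 * (n : ℤ) ^ 2 + 4502 * (n : ℤ) + 11512) = 32 := by
            ring
          rwa [heq] at this
        have h32' : (n + 13) ∣ 32 := by
          exact Int.natCast_dvd_natCast.mp (by exact_mod_cast h32 : ((n + 13 : ℕ) : ℤ) ∣ ((32 : ℕ) : ℤ))
        have : (n + 13) ∣ 1 := by
          have : (n + 13) ∣ 1 * 2 ^ 5 := by simpa using h32'
          exact Nat.Coprime.dvd_of_dvd_mul_right (cop2.pow_right 5) this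
        have := Nat.le_of_dvd (by norm_num) this
        omega
    · -- ℓ = ℓ0 = n + 11 : then m = n + 9
      obtain ⟨k, hk⟩ := h
      have hk1 : k = 1 := by
        rcases k with _ | _ | k
        · omega
        · rfl
        · exfalso
          have h' : (n + 11) * 2 ≤ (n + 11) * (k + 1 + 1) :=
            Nat.mul_le_mul_left _ (by omega)
          rw [← hk] at h'
          omega
      subst hk1
      obtain rfl : ℓ = n + 11 := by omega
      rw [show n + 11 - 1 = n + 10 from by omega] at h5
      have hcancel : (n + 13) * (n + 10) * (n + 11) * m ^ 2
          = (n + 13) * (n + 10) * (n + 11) * (n + 9) ^ 2 := by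
        rw [← h5]; ring
      have hm2 : m ^ 2 = (n + 9) ^ 2 :=
        Nat.eq_of_mul_eq_mul_left (by positivity) hcancel
      have hm : m = n + 9 := by nlinarith [hm2]
      exact ⟨rfl, by omega⟩
  · rintro ⟨rfl, rfl⟩
    refine ⟨by omega, ?_, by omega, ?_, ?_⟩
    · nlinarith
    · rw [show n + 11 - (n + 9) = 2 from by omega]
      exact even_two
    · rw [e1]; ring
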